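/- Let H be a groupoid and K a groupoid object in the category of left H-sets, with underlying groupoid having objects K₀ (with moment map μ₀: K₀ → H₀) and arrows K₁ (with moment map μ₁), where the H-action commutes with all groupoid structure maps. Define H ⋉ K to have objects K₀ and arrows the pairs (h,k) with h ∈ H₁, k ∈ K₁, s(h) well-matched so that k: h·x → y; source s(h,k) = h⁻¹·s(k), target t(h,k) = t(k), composition (h',k')∘(h,k) = (h'h, k' ∘ (h'·k)), unit x ↦ (1_{μ₀(x)}, 1_x), and inverse (h,k)⁻¹ = (h⁻¹, h⁻¹·k⁻¹). Then H ⋉ K is a groupoid. -/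

import Mathlib

open CategoryTheory

universe v u

/-- Let `H` be a groupoid and `K` a groupoid object in `H`-sets, encoded (via the
equivalence between groupoid objects in presheaves and presheaves of groupoids) as a
functor `K : H ⥤ Grpd`.  The generalized action groupoid `H ⋉ K` is the Grothendieck
construction of `K`: its objects are pairs `(c, a)` with `a ∈ K(c)` (i.e. the elements of
the `H`-set `K₀`), and its arrows `(c, a) → (c', b)` are pairs `(h, k)` with `h : c ⟶ c'`
and `k : h·a ⟶ b`, composed by `(h', k') ∘ (h, k) = (h'h, k' ∘ (h'·k))`.  The claim: with
the structure maps so defined, `H ⋉ K` is a groupoid, i.e. every morphism is invertible. -/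
theorem generalized_action_groupoid_is_groupoid
    (H : Type u) [Groupoid H] (K : H ⥤ Grpd.{v, v})
    {X Y : Grothendieck (K ⋙ Grpd.forgetToCat)} (f : X ⟶ Y) :
    IsIso f := by
  letI : Groupoid ↑((K ⋙ Grpd.forgetToCat).obj Y.base) := Grpd.str' (K.obj Y.base)
  have hfib : IsIso f.fiber := IsIso.of_groupoid f.fiber
  have e : ((K ⋙ Grpd.forgetToCat).map (Groupoid.inv f.base)).toFunctor.obj
      (((K ⋙ Grpd.forgetToCat).map f.base).toFunctor.obj X.fiber) = X.fiber := by
    rw [← Cat.Hom.comp_obj, ← Functor.map_comp, Groupoid.comp_inv,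
      CategoryTheory.Functor.map_id]; simp
  refine ⟨⟨⟨Groupoid.inv f.base,
    ((K ⋙ Grpd.forgetToCat).map (Groupoid.inv f.base)).toFunctor.map (inv f.fiber) ≫ eqToHom e⟩, ?_, ?_⟩⟩
  · refine Grothendieck.ext _ _ (by simp) ?_
    simp [eqToHom_map]
    erw [eqToHom_trans, eqToHom_trans]
  · refine Grothendieck.ext _ _ (by simp) ?_
    simp only [Grothendieck.comp_fiber, Grothendieck.id_fiber, Functor.map_comp]
    rw [show ((K ⋙ Grpd.forgetToCat).map f.base).toFunctor.map
        (((K ⋙ Grpd.forgetToCat).map (Groupoid.inv f.base)).toFunctor.map (inv f.fiber)) =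
        ((K ⋙ Grpd.forgetToCat).map (Groupoid.inv f.base) ≫
          (K ⋙ Grpd.forgetToCat).map f.base).toFunctor.map (inv f.fiber) from rfl]
    rw [Functor.congr_hom (congrArg Cat.Hom.toFunctor (show (K ⋙ Grpd.forgetToCat).map (Groupoid.inv f.base) ≫
      (K ⋙ Grpd.forgetToCat).map f.base = 𝟙 _ by
      rw [← Functor.map_comp, Groupoid.inv_comp, CategoryTheory.Functor.map_id])) (inv f.fiber)]
    simp [eqToHom_map]
    erw [eqToHom_trans, eqToHom_trans]
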